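/- Let G be a countably infinite cancellative semigroup and let (F_n) be a Følner sequence in G such that for every α ∈ (0,1) one has ∑_{n=1}^∞ α^{|F_n|} < ∞. Then for λ-almost every x ∈ {0,1}^G, for every continuous function f : {0,1}^G → ℝ (with {0,1} discrete and {0,1}^G carrying the product topology), (1/|F_n|)·∑_{g ∈ F_n} f(σ_g x) → ∫ f dλ as n → ∞, where σ_g x is the function h ↦ x(h·g). -/

import Mathlib

open Filter MeasureTheory

/- `(F n)` is a (left) Følner sequence in the semigroup `G`. -/
open scoped Classical in
def IsFolner {G : Type*} [Mul G] (F : ℕ → Finset G) : Prop :=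
  (∀ n, (F n).Nonempty) ∧
  ∀ g : G, Tendsto
    (fun n => (((F n).filter (fun h => g * h ∈ F n)).card : ℝ) / (F n).card)
    atTop (nhds 1)


open Finset Topology
open scoped Classical

section Aux

lemma slope_pos_exists {f : ℝ → ℝ} {d : ℝ} (hf : HasDerivAt f d 0) (hf0 : f 0 = 0)
    (hd : 0 < d) : ∃ a : ℝ, 0 < a ∧ a < 1 ∧ 0 < f a := by
  have h := hasDerivAt_iff_tendsto_slope.mp hf
  have h2 : ∀ᶠ a in 𝓝[≠] (0:ℝ), 0 < slope f 0 a := h.eventually (lt_mem_nhds hd)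
  have h3 : ∀ᶠ a in 𝓝[>] (0:ℝ), 0 < slope f 0 a :=
    h2.filter_mono (nhdsWithin_mono _ (fun a ha => ne_of_gt ha))
  have h4 : ∀ᶠ a in 𝓝[>] (0:ℝ), a < 1 := by
    have : Set.Iio (1:ℝ) ∈ 𝓝[>] (0:ℝ) :=
      nhdsWithin_le_nhds (Iio_mem_nhds one_pos)
    exact this
  have h5 : ∀ᶠ a in 𝓝[>] (0:ℝ), 0 < a := self_mem_nhdsWithin
  obtain ⟨a, ha1, ha2, ha3⟩ := (h3.and (h4.and h5)).exists
  refine ⟨a, ha3, ha2, ?_⟩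
  have hs : slope f 0 a = f a / a := by
    simp [slope, hf0, div_eq_inv_mul]
  rw [hs] at ha1
  have h6 := mul_pos ha1 ha3
  rwa [div_mul_cancel₀ _ (ne_of_gt ha3)] at h6

lemma exists_good_a {q ε : ℝ} (hq : 0 < q) (hε : 0 < ε) :
    ∃ a : ℝ, 0 < a ∧ 1 + a * q < (1 + a) ^ (q + ε : ℝ) := by
  set f : ℝ → ℝ := fun a => (q + ε) * Real.log (1 + a) - Real.log (1 + q * a) with hfdef
  have hd : HasDerivAt f ε 0 := by
    have h1 : HasDerivAt (fun a : ℝ => 1 + a) 1 0 := by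
      simpa using (hasDerivAt_id (0:ℝ)).const_add 1
    have h2 : HasDerivAt (fun a : ℝ => 1 + q * a) q 0 := by
      simpa using ((hasDerivAt_id (0:ℝ)).const_mul q).const_add 1
    have h3 := (h1.log (by norm_num)).const_mul (q + ε)
    have h4 := h2.log (by norm_num)
    have h5 := h3.sub h4
    convert h5 using 1
    · rfl
    · rfl
    · rfl
    simp
  obtain ⟨a, ha, ha1, hfa⟩ := slope_pos_exists hd (by simp [hfdef]) hε
  refine ⟨a, ha, ?_⟩
  have hpos : (0:ℝ) < 1 + q * a := by positivity
  have hpos2 : (0:ℝ) < 1 + a := by positivity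
  rw [Real.rpow_def_of_pos hpos2, mul_comm a q]
  calc 1 + q * a = Real.exp (Real.log (1 + q * a)) := (Real.exp_log hpos).symm
    _ < Real.exp (Real.log (1 + a) * (q + ε)) := by
        apply Real.exp_lt_exp.mpr
        have : 0 < (q + ε) * Real.log (1 + a) - Real.log (1 + q * a) := hfa
        linarith [this]

lemma exists_good_b {q ε : ℝ} (hq1 : q ≤ 1) (hε : 0 < ε) (hεq : ε < q) :
    ∃ b : ℝ, 0 < b ∧ b < 1 ∧ 1 - b * q < (1 - b) ^ (q - ε : ℝ) := by
  set f : ℝ → ℝ := fun b => (q - ε) * Real.log (1 - b) - Real.log (1 - q * b) with hfdef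
  have hd : HasDerivAt f ε 0 := by
    have h1 : HasDerivAt (fun b : ℝ => 1 - b) (-1) 0 := by
      simpa using (hasDerivAt_id (0:ℝ)).const_sub 1
    have h2 : HasDerivAt (fun b : ℝ => 1 - q * b) (-q) 0 := by
      simpa using ((hasDerivAt_id (0:ℝ)).const_mul q).const_sub 1
    have h3 := (h1.log (by norm_num)).const_mul (q - ε)
    have h4 := h2.log (by norm_num)
    have h5 := h3.sub h4
    convert h5 using 1
    · rfl
    · rfl
    · rfl
    norm_num
  obtain ⟨b, hb, hb1, hfb⟩ := slope_pos_exists hd (by simp [hfdef]) hε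
  refine ⟨b, hb, hb1, ?_⟩
  have hbq : q * b < 1 := by nlinarith
  have hpos : (0:ℝ) < 1 - q * b := by linarith
  have hpos2 : (0:ℝ) < 1 - b := by linarith
  rw [Real.rpow_def_of_pos hpos2, mul_comm b q]
  calc 1 - q * b = Real.exp (Real.log (1 - q * b)) := (Real.exp_log hpos).symm
    _ < Real.exp (Real.log (1 - b) * (q - ε)) := by
        apply Real.exp_lt_exp.mpr
        have : 0 < (q - ε) * Real.log (1 - b) - Real.log (1 - q * b) := hfb
        linarith [this]


variable {G : Type*} [Semigroup G] [IsCancelMul G]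

/-- conflict relation -/
def ConfRel (K : Finset G) (g g' : G) : Prop :=
  ∃ p : G × G, p.1 ∈ K ∧ p.2 ∈ K ∧ p.1 * g = p.2 * g'

lemma ConfRel.symm' {K : Finset G} {g g' : G} (h : ConfRel K g g') : ConfRel K g' g := by
  obtain ⟨⟨h1, h2⟩, hh1, hh2, he⟩ := h
  exact ⟨⟨h2, h1⟩, hh2, hh1, he.symm⟩

lemma rel_degree (K : Finset G) (A : Finset G) (g : G) :
    (A.filter (ConfRel K g)).card ≤ K.card * K.card := by
  have h : ∀ g' ∈ A.filter (ConfRel K g), ConfRel K g g' := fun g' hg' => (mem_filter.mp hg').2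
  classical
  calc (A.filter (ConfRel K g)).card ≤ (K ×ˢ K).card := by
        apply Finset.card_le_card_of_injOn (fun g' => if hg' : g' ∈ A.filter (ConfRel K g) then (h g' hg').choose else (g', g'))
        · intro g' hg'
          simp only [dif_pos (show g' ∈ A.filter (ConfRel K g) from hg')]
          obtain ⟨h1, h2, _⟩ := (h g' hg').choose_spec
          exact Finset.mem_product.mpr ⟨h1, h2⟩
        · intro a ha b hb heq
          simp only [Finset.mem_coe] at ha hb
          simp only [dif_pos ha, dif_pos hb] at heq
          obtain ⟨h1a, h2a, h3a⟩ := (h a ha).choose_spec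
          obtain ⟨h1b, h2b, h3b⟩ := (h b hb).choose_spec
          rw [heq] at h3a
          exact mul_left_cancel (h3a.symm.trans h3b)
    _ = K.card * K.card := Finset.card_product K K

lemma exists_coloring (K : Finset G) (A : Finset G) :
    ∃ c : G → Fin (K.card * K.card + 1),
      ∀ g ∈ A, ∀ g' ∈ A, g ≠ g' → ConfRel K g g' → c g ≠ c g' := by
  classical
  induction A using Finset.induction_on with
  | empty => exact ⟨fun _ => 0, by simp⟩
  | @insert a s ha ih =>
    obtain ⟨c, hc⟩ := ih
    set Nb : Finset (Fin (K.card * K.card + 1)) := (s.filter (ConfRel K a)).image c with hNb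
    have hcard : Nb.card < K.card * K.card + 1 :=
      lt_of_le_of_lt (Finset.card_image_le.trans (rel_degree K s a)) (Nat.lt_succ_self _)
    have : ∃ i, i ∉ Nb := by
      by_contra hcon
      push_neg at hcon
      have : (Finset.univ : Finset (Fin (K.card * K.card + 1))) ⊆ Nb := fun i _ => hcon i
      have := Finset.card_le_card this
      simp [Fintype.card_fin] at this
      omega
    obtain ⟨i, hi⟩ := this
    refine ⟨Function.update c a i, ?_⟩
    intro g hg g' hg' hne hrel
    rcases Finset.mem_insert.mp hg with rfl | hgs
    · rcases Finset.mem_insert.mp hg' with rfl | hg's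
      · exact absurd rfl hne
      · rw [Function.update_self, Function.update_of_ne (by rintro rfl; exact ha hg's)]
        intro hcon
        exact hi (hNb ▸ Finset.mem_image.mpr ⟨g', Finset.mem_filter.mpr ⟨hg's, hrel⟩, hcon.symm⟩)
    · rcases Finset.mem_insert.mp hg' with rfl | hg's
      · rw [Function.update_self, Function.update_of_ne (by rintro rfl; exact ha hgs)]
        intro hcon
        exact hi (hNb ▸ Finset.mem_image.mpr ⟨g, Finset.mem_filter.mpr ⟨hgs, hrel.symm'⟩, hcon⟩)
      · rw [Function.update_of_ne (by rintro rfl; exact ha hgs),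
          Function.update_of_ne (by rintro rfl; exact ha hg's)]
        exact hc g hgs g' hg's hne hrel


/-- pairwise disjoint translates condition -/
def DisjS (K S : Finset G) : Prop :=
  ∀ g ∈ S, ∀ g' ∈ S, g ≠ g' → ∀ p : G × G, p.1 ∈ K → p.2 ∈ K → p.1 * g ≠ p.2 * g'

def ESet (K : Finset G) (B : G → Bool) (S : Finset G) : Set (G → Bool) :=
  {x | ∀ g ∈ S, ∀ h ∈ K, x (h * g) = B h}

def Yf (K : Finset G) (B : G → Bool) (g : G) (x : G → Bool) : ℝ :=
  if (∀ h ∈ K, x (h * g) = B h) then 1 else 0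

def Ncnt (K : Finset G) (B : G → Bool) (S : Finset G) (x : G → Bool) : ℕ :=
  (S.filter fun g => ∀ h ∈ K, x (h * g) = B h).card


lemma measurable_shiftCyl (K : Finset G) (B : G → Bool) (S : Finset G) :
    MeasurableSet (ESet K B S) := by
  show MeasurableSet {x : G → Bool | ∀ g ∈ S, ∀ h ∈ K, x (h * g) = B h}
  have : {x : G → Bool | ∀ g ∈ S, ∀ h ∈ K, x (h * g) = B h}
      = ⋂ g ∈ (S : Set G), ⋂ h ∈ (K : Set G), (fun x : G → Bool => x (h * g)) ⁻¹' {B h} := by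
    ext x; simp [Set.mem_iInter]
  rw [this]
  exact MeasurableSet.biInter S.countable_toSet fun g _ =>
    MeasurableSet.biInter K.countable_toSet fun h _ =>
      (measurable_pi_apply (h * g)) (measurableSet_singleton _)

lemma meas_shiftCyl {μ : Measure (G → Bool)}
    (hμ : ∀ (K : Finset G) (B : G → Bool),
      μ {x | ∀ h ∈ K, x h = B h} = (2 : ENNReal)⁻¹ ^ K.card)
    (K : Finset G) (B : G → Bool) (S : Finset G) (hdisj : DisjS K S) :
    μ (ESet K B S) = (2 : ENNReal)⁻¹ ^ (S.card * K.card) := by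
  show μ {x : G → Bool | ∀ g ∈ S, ∀ h ∈ K, x (h * g) = B h} = _
  set L : Finset G := S.biUnion (fun g => K.image (· * g)) with hL
  set B' : G → Bool := fun u =>
    if hu : ∃ p : G × G, p.1 ∈ K ∧ p.2 ∈ S ∧ p.1 * p.2 = u then B hu.choose.1 else false
    with hB'
  have hset : {x : G → Bool | ∀ g ∈ S, ∀ h ∈ K, x (h * g) = B h}
      = {x | ∀ u ∈ L, x u = B' u} := by
    ext x
    constructor
    · intro hx u hu
      rw [hL] at hu
      obtain ⟨g, hg, hu2⟩ := Finset.mem_biUnion.mp hu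
      obtain ⟨h, hh, he⟩ := Finset.mem_image.mp hu2
      have hex : ∃ p : G × G, p.1 ∈ K ∧ p.2 ∈ S ∧ p.1 * p.2 = u := ⟨⟨h, g⟩, hh, hg, he⟩
      obtain ⟨h1, h2, h3⟩ := hex.choose_spec
      rw [hB']
      simp only [dif_pos hex]
      have hxu : x u = x (hex.choose.1 * hex.choose.2) := by rw [h3]
      rw [hxu]
      exact hx _ h2 _ h1
    · intro hx g hg h hh
      have huL : h * g ∈ L := Finset.mem_biUnion.mpr ⟨g, hg,
        Finset.mem_image.mpr ⟨h, hh, rfl⟩⟩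
      have hx2 := hx _ huL
      have hex : ∃ p : G × G, p.1 ∈ K ∧ p.2 ∈ S ∧ p.1 * p.2 = h * g := ⟨⟨h, g⟩, hh, hg, rfl⟩
      obtain ⟨h1, h2, h3⟩ := hex.choose_spec
      have hgg : hex.choose.2 = g := by
        by_contra hne
        exact hdisj _ h2 _ hg hne ⟨hex.choose.1, h⟩ h1 hh h3
      have h3' : hex.choose.1 * g = h * g := by rw [hgg] at h3; exact h3
      have hhh : hex.choose.1 = h := mul_right_cancel h3'
      rw [hx2, hB']
      simp only [dif_pos hex]
      exact congrArg B hhh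
  have hdisj2 : ∀ g ∈ S, ∀ g' ∈ S, g ≠ g' →
      Disjoint (K.image (· * g)) (K.image (· * g')) := by
    intro g hg g' hg' hne
    rw [Finset.disjoint_left]
    intro u hu hu'
    obtain ⟨h, hh, he⟩ := Finset.mem_image.mp hu
    obtain ⟨h', hh', he'⟩ := Finset.mem_image.mp hu'
    exact hdisj g hg g' hg' hne ⟨h, h'⟩ hh hh' (he.trans he'.symm)
  have hcard : L.card = S.card * K.card := by
    rw [hL, Finset.card_biUnion hdisj2]
    have : ∀ g ∈ S, (K.image (· * g)).card = K.card := fun g _ =>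
      Finset.card_image_of_injective K (fun a b hab => mul_right_cancel hab)
    rw [Finset.sum_congr rfl this, Finset.sum_const, smul_eq_mul]
  rw [hset, hμ L B', hcard]


lemma disjS_mono {K S T : Finset G} (hST : S ⊆ T) (h : DisjS K T) : DisjS K S :=
  fun g hg g' hg' hne p hp1 hp2 => h g (hST hg) g' (hST hg') hne p hp1 hp2

lemma prob_of_cyl {μ : Measure (G → Bool)}
    (hμ : ∀ (K : Finset G) (B : G → Bool),
      μ {x | ∀ h ∈ K, x h = B h} = (2 : ENNReal)⁻¹ ^ K.card) :
    IsProbabilityMeasure μ := by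
  constructor
  have := hμ ∅ (fun _ => false)
  simpa using this

lemma prodY_eq_indicator (K : Finset G) (B : G → Bool) (S : Finset G) (x : G → Bool) :
    (∏ g ∈ S, Yf K B g x) = Set.indicator (ESet K B S) (fun _ => (1:ℝ)) x := by
  by_cases hx : x ∈ ESet K B S
  · rw [Set.indicator_of_mem hx]
    apply Finset.prod_eq_one
    intro g hg
    simp only [Yf, if_pos (hx g hg)]
  · rw [Set.indicator_of_notMem hx]
    simp only [ESet, Set.mem_setOf_eq, not_forall] at hx
    obtain ⟨g, hg, hfail⟩ := hx
    apply Finset.prod_eq_zero hg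
    simp only [Yf]
    rw [if_neg]
    intro hc
    obtain ⟨h, hh, hne⟩ := hfail
    exact hne (hc h hh)

lemma prod_add_decomp (K : Finset G) (B : G → Bool) (a : ℝ) (T : Finset G) (x : G → Bool) :
    ∏ g ∈ T, (a * Yf K B g x + 1)
      = ∑ S ∈ T.powerset, a ^ S.card * Set.indicator (ESet K B S) (fun _ => (1:ℝ)) x := by
  rw [Finset.prod_add]
  apply Finset.sum_congr rfl
  intro S hS
  rw [Finset.prod_const_one, mul_one, Finset.prod_mul_distrib, Finset.prod_const,
    prodY_eq_indicator]

lemma integrable_P {μ : Measure (G → Bool)} [IsProbabilityMeasure μ]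
    (K : Finset G) (B : G → Bool) (a : ℝ) (T : Finset G) :
    Integrable (fun x => ∏ g ∈ T, (a * Yf K B g x + 1)) μ := by
  have : (fun x => ∏ g ∈ T, (a * Yf K B g x + 1))
      = fun x => ∑ S ∈ T.powerset, a ^ S.card * Set.indicator (ESet K B S) (fun _ => (1:ℝ)) x :=
    funext fun x => prod_add_decomp K B a T x
  rw [this]
  apply integrable_finset_sum
  intro S hS
  exact (((integrable_const (1:ℝ)).indicator (measurable_shiftCyl K B S)).const_mul _)

lemma integral_P {μ : Measure (G → Bool)} [IsProbabilityMeasure μ]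
    (hμ : ∀ (K : Finset G) (B : G → Bool),
      μ {x | ∀ h ∈ K, x h = B h} = (2 : ENNReal)⁻¹ ^ K.card)
    (K : Finset G) (B : G → Bool) (a : ℝ) (T : Finset G) (hdisj : DisjS K T) :
    ∫ x, ∏ g ∈ T, (a * Yf K B g x + 1) ∂μ = (a * ((2:ℝ)⁻¹ ^ K.card) + 1) ^ T.card := by
  have h1 : (fun x => ∏ g ∈ T, (a * Yf K B g x + 1))
      = fun x => ∑ S ∈ T.powerset, a ^ S.card * Set.indicator (ESet K B S) (fun _ => (1:ℝ)) x :=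
    funext fun x => prod_add_decomp K B a T x
  rw [h1, integral_finset_sum _ (fun S hS =>
    (((integrable_const (1:ℝ)).indicator (measurable_shiftCyl K B S)).const_mul _))]
  have h2 : ∀ S ∈ T.powerset,
      ∫ x, a ^ S.card * Set.indicator (ESet K B S) (fun _ => (1:ℝ)) x ∂μ
        = (a * ((2:ℝ)⁻¹ ^ K.card)) ^ S.card := by
    intro S hS
    rw [integral_const_mul _ _, integral_indicator_const (1:ℝ) (measurable_shiftCyl K B S),
      measureReal_def, meas_shiftCyl hμ K B S (disjS_mono (Finset.mem_powerset.mp hS) hdisj)]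
    have : (((2:ENNReal)⁻¹ ^ (S.card * K.card)).toReal) = ((2:ℝ)⁻¹ ^ K.card) ^ S.card := by
      rw [ENNReal.toReal_pow]
      norm_num
      rw [mul_comm, pow_mul]
    rw [smul_eq_mul, this, mul_one, mul_pow]
  rw [Finset.sum_congr rfl h2]
  have h3 := Finset.prod_add (fun _ : G => a * ((2:ℝ)⁻¹ ^ K.card)) (fun _ => (1:ℝ)) T
  rw [Finset.prod_const] at h3
  rw [h3]
  apply Finset.sum_congr rfl
  intro S hS
  rw [Finset.prod_const_one, mul_one, Finset.prod_const]

set_option maxHeartbeats 1000000 in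
lemma chernoff_class {μ : Measure (G → Bool)} [IsProbabilityMeasure μ]
    (hμ : ∀ (K : Finset G) (B : G → Bool),
      μ {x | ∀ h ∈ K, x h = B h} = (2 : ENNReal)⁻¹ ^ K.card)
    (K : Finset G) (B : G → Bool) {ε' : ℝ} (hε' : 0 < ε') (hε'q : ε' < (2:ℝ)⁻¹ ^ K.card) :
    ∃ β : ℝ, 0 < β ∧ β < 1 ∧ ∀ T : Finset G, DisjS K T →
      μ {x | ε' * T.card ≤ |((Ncnt K B T x : ℝ)) - ((2:ℝ)⁻¹ ^ K.card) * T.card|}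
        ≤ ENNReal.ofReal (2 * β ^ T.card) := by
  set q : ℝ := (2:ℝ)⁻¹ ^ K.card with hqdef
  have hq0 : 0 < q := by positivity
  have hq1 : q ≤ 1 := by
    apply pow_le_one₀ <;> norm_num
  obtain ⟨a, ha, hlt₁⟩ := exists_good_a hq0 hε'
  obtain ⟨b, hb, hb1, hlt₂⟩ := exists_good_b hq1 hε' hε'q
  have h1a : (0:ℝ) < 1 + a := by linarith
  have h1b : (0:ℝ) < 1 - b := by linarith
  have hden₁ : (0:ℝ) < (1+a) ^ (q+ε' : ℝ) := Real.rpow_pos_of_pos h1a _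
  have hden₂ : (0:ℝ) < (1-b) ^ (q-ε' : ℝ) := Real.rpow_pos_of_pos h1b _
  set β₁ : ℝ := (1 + a*q) / (1+a) ^ (q+ε' : ℝ) with hβ₁
  set β₂ : ℝ := (1 - b*q) / (1-b) ^ (q-ε' : ℝ) with hβ₂
  have hnum₁ : (0:ℝ) < 1 + a*q := by nlinarith
  have hnum₂ : (0:ℝ) < 1 - b*q := by nlinarith
  have hβ₁0 : 0 < β₁ := div_pos hnum₁ hden₁
  have hβ₂0 : 0 < β₂ := div_pos hnum₂ hden₂
  have hβ₁1 : β₁ < 1 := (div_lt_one hden₁).mpr hlt₁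
  have hβ₂1 : β₂ < 1 := (div_lt_one hden₂).mpr hlt₂
  refine ⟨max β₁ β₂, lt_max_of_lt_left hβ₁0, max_lt hβ₁1 hβ₂1, ?_⟩
  intro T hdisj
  set m := T.card with hm
  set N : (G → Bool) → ℕ := Ncnt K B T with hN
  -- upper tail
  have hYnn : ∀ g x, 0 ≤ Yf K B g x := by
    intro g x; unfold Yf; split <;> norm_num
  have hYle : ∀ g x, Yf K B g x ≤ 1 := by
    intro g x; unfold Yf; split <;> norm_num
  have hPup : ∀ x, ∏ g ∈ T, (a * Yf K B g x + 1) = (1+a) ^ (N x) := by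
    intro x
    rw [← Finset.prod_filter_mul_prod_filter_not T (fun g => ∀ h ∈ K, x (h * g) = B h)]
    have e1 : ∏ g ∈ T.filter (fun g => ∀ h ∈ K, x (h * g) = B h), (a * Yf K B g x + 1)
        = (1+a) ^ (N x) := by
      rw [Finset.prod_congr rfl (fun g hg => ?_), Finset.prod_const]
      · rfl
      · have := (Finset.mem_filter.mp hg).2
        simp only [Yf, if_pos this]; ring
    have e2 : ∏ g ∈ T.filter (fun g => ¬ ∀ h ∈ K, x (h * g) = B h), (a * Yf K B g x + 1)
        = 1 := by
      apply Finset.prod_eq_one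
      intro g hg
      have := (Finset.mem_filter.mp hg).2
      simp only [Yf, if_neg this]; ring
    rw [e1, e2, mul_one]
  have hPdn : ∀ x, ∏ g ∈ T, ((-b) * Yf K B g x + 1) = (1-b) ^ (N x) := by
    intro x
    rw [← Finset.prod_filter_mul_prod_filter_not T (fun g => ∀ h ∈ K, x (h * g) = B h)]
    have e1 : ∏ g ∈ T.filter (fun g => ∀ h ∈ K, x (h * g) = B h), ((-b) * Yf K B g x + 1)
        = (1-b) ^ (N x) := by
      rw [Finset.prod_congr rfl (fun g hg => ?_), Finset.prod_const]
      · rfl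
      · have := (Finset.mem_filter.mp hg).2
        simp only [Yf, if_pos this]; ring
    have e2 : ∏ g ∈ T.filter (fun g => ¬ ∀ h ∈ K, x (h * g) = B h), ((-b) * Yf K B g x + 1)
        = 1 := by
      apply Finset.prod_eq_one
      intro g hg
      have := (Finset.mem_filter.mp hg).2
      simp only [Yf, if_neg this]; ring
    rw [e1, e2, mul_one]
  have hPupnn : ∀ x, (0:ℝ) ≤ ∏ g ∈ T, (a * Yf K B g x + 1) := by
    intro x; rw [hPup x]; positivity
  have hPdnnn : ∀ x, (0:ℝ) ≤ ∏ g ∈ T, ((-b) * Yf K B g x + 1) := by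
    intro x; rw [hPdn x]; positivity
  set r₁ : ℝ := (1+a) ^ ((q+ε') * m : ℝ) with hr₁
  set r₂ : ℝ := (1-b) ^ ((q-ε') * m : ℝ) with hr₂
  have hr₁pos : 0 < r₁ := Real.rpow_pos_of_pos h1a _
  have hr₂pos : 0 < r₂ := Real.rpow_pos_of_pos h1b _
  have hsub₁ : {x : G → Bool | (q+ε') * m ≤ (N x : ℝ)}
      ⊆ {x | r₁ ≤ ∏ g ∈ T, (a * Yf K B g x + 1)} := by
    intro x hx
    simp only [Set.mem_setOf_eq] at hx ⊢
    rw [hPup x, ← Real.rpow_natCast (1+a) (N x)]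
    exact Real.rpow_le_rpow_of_exponent_le (by linarith) hx
  have hsub₂ : {x : G → Bool | (N x : ℝ) ≤ (q-ε') * m}
      ⊆ {x | r₂ ≤ ∏ g ∈ T, ((-b) * Yf K B g x + 1)} := by
    intro x hx
    simp only [Set.mem_setOf_eq] at hx ⊢
    rw [hPdn x, ← Real.rpow_natCast (1-b) (N x)]
    exact Real.rpow_le_rpow_of_exponent_ge h1b (by linarith) hx
  have hmar₁ := mul_meas_ge_le_integral_of_nonneg
    (Filter.Eventually.of_forall hPupnn) (integrable_P K B a T) r₁ (μ := μ)
  have hmar₂ := mul_meas_ge_le_integral_of_nonneg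
    (Filter.Eventually.of_forall hPdnnn) (integrable_P K B (-b) T) r₂ (μ := μ)
  rw [integral_P hμ K B a T hdisj] at hmar₁
  rw [integral_P hμ K B (-b) T hdisj] at hmar₂
  have hr₁eq : r₁ = ((1+a) ^ (q+ε' : ℝ)) ^ m := by
    rw [← Real.rpow_natCast ((1+a) ^ (q+ε' : ℝ)) m, ← Real.rpow_mul h1a.le]
  have hr₂eq : r₂ = ((1-b) ^ (q-ε' : ℝ)) ^ m := by
    rw [← Real.rpow_natCast ((1-b) ^ (q-ε' : ℝ)) m, ← Real.rpow_mul h1b.le]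
  have hb₁ : (μ {x | (q+ε') * m ≤ (N x : ℝ)}).toReal ≤ β₁ ^ m := by
    have h1 : (μ {x | (q+ε') * m ≤ (N x : ℝ)}).toReal
        ≤ (μ {x | r₁ ≤ ∏ g ∈ T, (a * Yf K B g x + 1)}).toReal :=
      ENNReal.toReal_mono (measure_ne_top μ _) (measure_mono hsub₁)
    have h2 : (μ {x | r₁ ≤ ∏ g ∈ T, (a * Yf K B g x + 1)}).toReal ≤ (a*q+1)^m / r₁ := by
      rw [le_div_iff₀ hr₁pos, mul_comm]
      exact hmar₁
    have h3 : (a*q+1)^m / r₁ = β₁ ^ m := by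
      rw [hβ₁, div_pow, hr₁eq]
      congr 1
      ring
    linarith [h1, h2, h3.symm.le]
  have hb₂ : (μ {x | (N x : ℝ) ≤ (q-ε') * m}).toReal ≤ β₂ ^ m := by
    have h1 : (μ {x | (N x : ℝ) ≤ (q-ε') * m}).toReal
        ≤ (μ {x | r₂ ≤ ∏ g ∈ T, ((-b) * Yf K B g x + 1)}).toReal :=
      ENNReal.toReal_mono (measure_ne_top μ _) (measure_mono hsub₂)
    have h2 : (μ {x | r₂ ≤ ∏ g ∈ T, ((-b) * Yf K B g x + 1)}).toReal
        ≤ ((-b)*q+1)^m / r₂ := by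
      rw [le_div_iff₀ hr₂pos, mul_comm]
      exact hmar₂
    have h3 : ((-b)*q+1)^m / r₂ = β₂ ^ m := by
      rw [hβ₂, div_pow, hr₂eq]
      congr 1
      ring
    linarith [h1, h2, h3.symm.le]
  have hsub : {x : G → Bool | ε' * m ≤ |((N x : ℝ)) - q * m|}
      ⊆ {x | (q+ε') * m ≤ (N x : ℝ)} ∪ {x | (N x : ℝ) ≤ (q-ε') * m} := by
    intro x hx
    simp only [Set.mem_setOf_eq, Set.mem_union] at hx ⊢
    rcases le_abs.mp hx with h | h
    · left; nlinarith
    · right; nlinarith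
  calc μ {x : G → Bool | ε' * m ≤ |((N x : ℝ)) - q * m|}
      ≤ μ ({x | (q+ε') * m ≤ (N x : ℝ)} ∪ {x | (N x : ℝ) ≤ (q-ε') * m}) :=
        measure_mono hsub
    _ ≤ μ {x | (q+ε') * m ≤ (N x : ℝ)} + μ {x | (N x : ℝ) ≤ (q-ε') * m} :=
        measure_union_le _ _
    _ ≤ ENNReal.ofReal (β₁ ^ m) + ENNReal.ofReal (β₂ ^ m) := by
        apply add_le_add
        · rw [← ENNReal.ofReal_toReal (measure_ne_top μ _)]
          exact ENNReal.ofReal_le_ofReal hb₁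
        · rw [← ENNReal.ofReal_toReal (measure_ne_top μ _)]
          exact ENNReal.ofReal_le_ofReal hb₂
    _ ≤ ENNReal.ofReal (2 * max β₁ β₂ ^ m) := by
        rw [← ENNReal.ofReal_add (by positivity) (by positivity)]
        apply ENNReal.ofReal_le_ofReal
        have e1 : β₁ ^ m ≤ max β₁ β₂ ^ m :=
          pow_le_pow_left₀ hβ₁0.le (le_max_left _ _) m
        have e2 : β₂ ^ m ≤ max β₁ β₂ ^ m :=
          pow_le_pow_left₀ hβ₂0.le (le_max_right _ _) m
        linarith


set_option maxHeartbeats 1000000 in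
lemma ae_cylinder_tendsto {μ : Measure (G → Bool)} [IsProbabilityMeasure μ]
    (hμ : ∀ (K : Finset G) (B : G → Bool),
      μ {x | ∀ h ∈ K, x h = B h} = (2 : ENNReal)⁻¹ ^ K.card)
    (F : ℕ → Finset G) (hne : ∀ n, (F n).Nonempty)
    (hsum : ∀ α : ℝ, α ∈ Set.Ioo (0 : ℝ) 1 → Summable fun n => α ^ (F n).card)
    (K : Finset G) (B : G → Bool) :
    ∀ᵐ x ∂μ, Tendsto (fun n => ((Ncnt K B (F n) x : ℝ)) / (F n).card)
      atTop (𝓝 ((2:ℝ)⁻¹ ^ K.card)) := by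
  set q : ℝ := (2:ℝ)⁻¹ ^ K.card with hqdef
  have hq0 : 0 < q := by positivity
  have hq1 : q ≤ 1 := by apply pow_le_one₀ <;> norm_num
  set D' : ℕ := K.card * K.card + 1 with hD'
  -- the bad events
  set Bad : ℕ → ℕ → Set (G → Bool) := fun j n =>
    {x | (q/(j+2)) * (F n).card ≤ |((Ncnt K B (F n) x : ℝ)) - q * (F n).card|} with hBad
  have key : ∀ j : ℕ, ∀ᵐ x ∂μ, ∀ᶠ n in atTop, x ∉ Bad j n := by
    intro j
    set ε : ℝ := q/(j+2) with hε
    have hε0 : 0 < ε := by positivity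
    have hεq : ε ≤ q/2 := by
      rw [hε, div_le_div_iff₀ (by positivity) (by norm_num)]
      nlinarith
    set ε' : ℝ := ε/2 with hε'
    have hε'0 : 0 < ε' := by positivity
    have hε'q : ε' < q := by
      rw [hε']; nlinarith
    obtain ⟨β, hβ0, hβ1, hβ⟩ := chernoff_class hμ K B hε'0 hε'q
    set δ : ℝ := ε / (4 * D') with hδ
    have hδ0 : 0 < δ := by
      apply div_pos hε0
      positivity
    set α : ℝ := β ^ (δ : ℝ) with hα
    have hα0 : 0 < α := Real.rpow_pos_of_pos hβ0 _
    have hα1 : α < 1 := Real.rpow_lt_one hβ0.le hβ1 hδ0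
    -- the per-n bound
    have hbound : ∀ n, μ (Bad j n) ≤ ENNReal.ofReal ((2*D') * α ^ (F n).card) := by
      intro n
      set A := F n with hA
      set M := A.card with hM
      have hM1 : 1 ≤ M := Finset.card_pos.mpr (hne n)
      obtain ⟨c, hc⟩ := exists_coloring K A
      set T : Fin D' → Finset G := fun i => A.filter (fun g => c g = i) with hT
      have hTdisj : ∀ i, DisjS K (T i) := by
        intro i g hg g' hg' hgne p hp1 hp2 hpe
        have h1 := Finset.mem_filter.mp hg
        have h2 := Finset.mem_filter.mp hg'
        exact hc g h1.1 g' h2.1 hgne ⟨p, hp1, hp2, hpe⟩ (h1.2.trans h2.2.symm)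
      have hTsub : ∀ i, T i ⊆ A := fun i => Finset.filter_subset _ _
      have hMsum : M = ∑ i : Fin D', (T i).card :=
        Finset.card_eq_sum_card_fiberwise (fun g _ => Finset.mem_univ (c g))
      have hNsum : ∀ x, Ncnt K B A x = ∑ i : Fin D', Ncnt K B (T i) x := by
        intro x
        have h1 : Ncnt K B A x
            = ∑ i : Fin D', ((A.filter (fun g => ∀ h ∈ K, x (h*g) = B h)).filter
                (fun g => c g = i)).card :=
          Finset.card_eq_sum_card_fiberwise (fun g _ => Finset.mem_univ (c g))
        rw [h1]
        apply Finset.sum_congr rfl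
        intro i _
        rw [Ncnt, hT, Finset.filter_comm]
      set bigs : Finset (Fin D') :=
        Finset.univ.filter (fun i => (δ * M : ℝ) ≤ (T i).card) with hbigs
      have hsubBad : Bad j n ⊆
          ⋃ i ∈ bigs, {x | ε' * (T i).card ≤ |((Ncnt K B (T i) x : ℝ)) - q * (T i).card|} := by
        intro x hx
        by_contra hcon
        simp only [Set.mem_iUnion, Set.mem_setOf_eq, not_exists, not_le] at hcon
        have hd : ((Ncnt K B A x : ℝ)) - q * M
            = ∑ i : Fin D', (((Ncnt K B (T i) x : ℝ)) - q * (T i).card) := by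
          rw [Finset.sum_sub_distrib, ← Finset.mul_sum]
          push_cast [hNsum x, hMsum]
          ring
        have habs : |((Ncnt K B A x : ℝ)) - q * M|
            ≤ ∑ i : Fin D', |((Ncnt K B (T i) x : ℝ)) - q * (T i).card| := by
          rw [hd]; exact Finset.abs_sum_le_sum_abs _ _
        have hsplit := Finset.sum_filter_add_sum_filter_not Finset.univ
          (fun i : Fin D' => (δ * M : ℝ) ≤ (T i).card)
          (fun i => |((Ncnt K B (T i) x : ℝ)) - q * (T i).card|)
        have hbig_bound : ∑ i ∈ bigs, |((Ncnt K B (T i) x : ℝ)) - q * (T i).card|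
            ≤ ε' * M := by
          calc ∑ i ∈ bigs, |((Ncnt K B (T i) x : ℝ)) - q * (T i).card|
              ≤ ∑ i ∈ bigs, ε' * (T i).card := by
                apply Finset.sum_le_sum
                intro i hi
                exact (hcon i (by simpa [hbigs] using hi)).le
            _ = ε' * ∑ i ∈ bigs, ((T i).card : ℝ) := by rw [Finset.mul_sum]
            _ ≤ ε' * M := by
                apply mul_le_mul_of_nonneg_left _ hε'0.le
                calc ∑ i ∈ bigs, ((T i).card : ℝ)
                    ≤ ∑ i : Fin D', ((T i).card : ℝ) :=
                      Finset.sum_le_sum_of_subset_of_nonneg (Finset.subset_univ _)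
                        (fun i _ _ => by positivity)
                  _ = (M : ℝ) := by rw [hMsum]; push_cast; ring
        have hsmall_bound : ∑ i ∈ Finset.univ.filter
              (fun i : Fin D' => ¬ ((δ * M : ℝ) ≤ (T i).card)),
              |((Ncnt K B (T i) x : ℝ)) - q * (T i).card| ≤ D' * (δ * M) := by
          calc ∑ i ∈ Finset.univ.filter (fun i : Fin D' => ¬ ((δ * M : ℝ) ≤ (T i).card)),
                |((Ncnt K B (T i) x : ℝ)) - q * (T i).card|
              ≤ ∑ i ∈ Finset.univ.filter (fun i : Fin D' => ¬ ((δ * M : ℝ) ≤ (T i).card)),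
                (δ * M) := by
                apply Finset.sum_le_sum
                intro i hi
                have hilt : ((T i).card : ℝ) < δ * M := by
                  have := (Finset.mem_filter.mp hi).2
                  linarith [not_le.mp this]
                have hNle : (Ncnt K B (T i) x : ℝ) ≤ (T i).card := by
                  exact_mod_cast Nat.cast_le.mpr (Finset.card_filter_le _ _)
                have hNnn : (0:ℝ) ≤ (Ncnt K B (T i) x : ℝ) := by positivity
                have hqm : (0:ℝ) ≤ q * (T i).card := by positivity
                have hqm2 : q * (T i).card ≤ ((T i).card : ℝ) := by
                  nlinarith [Nat.cast_nonneg (α := ℝ) (T i).card]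
                rw [abs_le]
                constructor <;> nlinarith
            _ ≤ D' * (δ * M) := by
                rw [Finset.sum_const, nsmul_eq_mul]
                apply mul_le_mul_of_nonneg_right _ (by positivity)
                have h3 : (Finset.univ.filter
                    (fun i : Fin D' => ¬ ((δ * M : ℝ) ≤ (T i).card))).card ≤ D' := by
                  simpa using Finset.card_filter_le Finset.univ
                    (fun i : Fin D' => ¬ ((δ * M : ℝ) ≤ (T i).card))
                exact_mod_cast h3
        have htotal : |((Ncnt K B A x : ℝ)) - q * M| ≤ (3/4) * (ε * M) := by
          have hD'δ : D' * (δ * M) = (ε/4) * M := by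
            rw [hδ]
            have hD'0 : (D' : ℝ) ≠ 0 := by positivity
            field_simp
          calc |((Ncnt K B A x : ℝ)) - q * M|
              ≤ ∑ i : Fin D', |((Ncnt K B (T i) x : ℝ)) - q * (T i).card| := habs
            _ = ∑ i ∈ bigs, |((Ncnt K B (T i) x : ℝ)) - q * (T i).card|
                + ∑ i ∈ Finset.univ.filter
                    (fun i : Fin D' => ¬ ((δ * M : ℝ) ≤ (T i).card)),
                  |((Ncnt K B (T i) x : ℝ)) - q * (T i).card| := by
                rw [← hsplit]
            _ ≤ ε' * M + D' * (δ * M) := add_le_add hbig_bound hsmall_bound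
            _ = (3/4) * (ε * M) := by rw [hD'δ, hε']; ring
        have hxBad : ε * M ≤ |((Ncnt K B A x : ℝ)) - q * M| := hx
        have hεM : 0 < ε * M := by
          apply mul_pos hε0
          exact_mod_cast hM1
        linarith
      calc μ (Bad j n)
          ≤ μ (⋃ i ∈ bigs, {x | ε' * (T i).card
              ≤ |((Ncnt K B (T i) x : ℝ)) - q * (T i).card|}) := measure_mono hsubBad
        _ ≤ ∑ i ∈ bigs, μ {x | ε' * (T i).card
              ≤ |((Ncnt K B (T i) x : ℝ)) - q * (T i).card|} :=
            measure_biUnion_finset_le _ _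
        _ ≤ ∑ i ∈ bigs, ENNReal.ofReal (2 * α ^ M) := by
            apply Finset.sum_le_sum
            intro i hi
            refine le_trans (hβ (T i) (hTdisj i)) (ENNReal.ofReal_le_ofReal ?_)
            apply mul_le_mul_of_nonneg_left _ (by norm_num)
            have hige : (δ * M : ℝ) ≤ (T i).card := by
              rw [hbigs] at hi
              exact (Finset.mem_filter.mp hi).2
            calc β ^ (T i).card = β ^ ((T i).card : ℝ) := by
                  rw [Real.rpow_natCast]
              _ ≤ β ^ (δ * M : ℝ) :=
                  Real.rpow_le_rpow_of_exponent_ge hβ0 hβ1.le hige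
              _ = α ^ M := by
                  rw [hα, ← Real.rpow_natCast (β ^ (δ:ℝ)) M, ← Real.rpow_mul hβ0.le]
        _ ≤ ENNReal.ofReal ((2*D') * α ^ M) := by
            rw [Finset.sum_const, nsmul_eq_mul]
            have hcardle : (bigs.card : ENNReal) ≤ (D' : ENNReal) := by
              have h1 : bigs.card ≤ D' := by
                have := Finset.card_filter_le Finset.univ
                  (fun i : Fin D' => (δ * M : ℝ) ≤ (T i).card)
                simpa using this
              exact_mod_cast h1
            calc (bigs.card : ENNReal) * ENNReal.ofReal (2 * α ^ M)
                ≤ (D' : ENNReal) * ENNReal.ofReal (2 * α ^ M) :=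
                  mul_le_mul_left hcardle _
              _ = ENNReal.ofReal ((2*D') * α ^ M) := by
                  rw [← ENNReal.ofReal_natCast D', ← ENNReal.ofReal_mul (by positivity)]
                  congr 1
                  ring
    -- Borel-Cantelli
    apply MeasureTheory.ae_eventually_notMem
    have hsum2 : Summable (fun n => (2*D') * α ^ (F n).card) :=
      (hsum α ⟨hα0, hα1⟩).mul_left _
    have hle : ∑' n, μ (Bad j n) ≤ ENNReal.ofReal (∑' n, (2*D') * α ^ (F n).card) := by
      refine le_trans (ENNReal.tsum_le_tsum hbound) (le_of_eq ?_)
      exact (ENNReal.ofReal_tsum_of_nonneg (fun n => by positivity) hsum2).symm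
    exact ne_top_of_le_ne_top ENNReal.ofReal_ne_top hle
  -- combine over j and conclude convergence
  rw [← MeasureTheory.ae_all_iff] at key
  filter_upwards [key] with x hx
  rw [Metric.tendsto_atTop]
  intro r hr
  obtain ⟨j, hj⟩ := exists_nat_gt (q / r)
  have hjr : q / (j+2) < r := by
    rw [div_lt_iff₀ (by positivity)]
    have h2 : q / r < (j:ℝ) + 2 := by linarith
    rw [div_lt_iff₀ hr] at h2
    nlinarith
  obtain ⟨N₀, hN₀⟩ := (Filter.eventually_atTop).mp (hx j)
  refine ⟨N₀, fun n hn => ?_⟩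
  have h1 := hN₀ n hn
  simp only [hBad, Set.mem_setOf_eq, not_le] at h1
  have hMpos : (0:ℝ) < (F n).card := by
    exact_mod_cast Finset.card_pos.mpr (hne n)
  rw [Real.dist_eq]
  have heq : ((Ncnt K B (F n) x : ℝ)) / (F n).card - q
      = (((Ncnt K B (F n) x : ℝ)) - q * (F n).card) / (F n).card := by
    rw [sub_div, mul_div_cancel_right₀ _ (ne_of_gt hMpos)]
  rw [heq, abs_div, abs_of_pos hMpos, div_lt_iff₀ hMpos]
  calc |((Ncnt K B (F n) x : ℝ)) - q * (F n).card| < (q/(j+2)) * (F n).card := h1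
    _ ≤ r * (F n).card := by
        apply mul_le_mul_of_nonneg_right hjr.le hMpos.le


open scoped Classical in
lemma unif_approx {G : Type*} [Countable G] {f : (G → Bool) → ℝ} (hf : Continuous f)
    {ε : ℝ} (hε : 0 < ε) :
    ∃ K : Finset G, ∀ y z : G → Bool, (∀ h ∈ K, y h = z h) → |f y - f z| ≤ ε := by
  have hnb : ∀ x : G → Bool, ∃ I : Finset G,
      {y : G → Bool | ∀ h ∈ I, y h = x h} ⊆ f ⁻¹' Metric.ball (f x) (ε/2) := by
    intro x
    have hopen : IsOpen (f ⁻¹' Metric.ball (f x) (ε/2)) :=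
      (Metric.isOpen_ball).preimage hf
    have hmem : x ∈ f ⁻¹' Metric.ball (f x) (ε/2) := by
      simp only [Set.mem_preimage, Metric.mem_ball, dist_self]
      positivity
    obtain ⟨I, u, hu, hsub⟩ := isOpen_pi_iff.mp hopen x hmem
    refine ⟨I, ?_⟩
    intro y hy
    apply hsub
    intro i hi
    rw [Set.mem_setOf_eq] at hy
    rw [hy i hi]
    exact (hu i hi).2
  choose I hI using hnb
  have hcover : (Set.univ : Set (G → Bool)) ⊆
      ⋃ x ∈ (Set.univ : Set (G → Bool)), {y : G → Bool | ∀ h ∈ I x, y h = x h} := by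
    intro y _
    simp only [Set.mem_iUnion]
    exact ⟨y, Set.mem_univ y, fun h _ => rfl⟩
  have hopenV : ∀ x : G → Bool, IsOpen {y : G → Bool | ∀ h ∈ I x, y h = x h} := by
    intro x
    have : {y : G → Bool | ∀ h ∈ I x, y h = x h}
        = Set.pi (I x : Set G) (fun i => {x i}) := by
      ext y; simp [Set.mem_pi]
    rw [this]
    exact isOpen_set_pi (I x).finite_toSet (fun i _ => isOpen_discrete _)
  obtain ⟨t, ht⟩ := isCompact_univ.elim_finite_subcover
    (fun x : G → Bool => {y : G → Bool | ∀ h ∈ I x, y h = x h})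
    hopenV (by intro y _; simp only [Set.mem_iUnion]; exact ⟨y, fun h _ => rfl⟩)
  refine ⟨t.biUnion (fun x => I x), ?_⟩
  intro y z hyz
  have hy : y ∈ ⋃ x ∈ t, {w : G → Bool | ∀ h ∈ I x, w h = x h} := ht (Set.mem_univ y)
  simp only [Set.mem_iUnion] at hy
  obtain ⟨x₀, hx₀t, hy₀⟩ := hy
  have hz₀ : z ∈ {w : G → Bool | ∀ h ∈ I x₀, w h = x₀ h} := by
    intro h hh
    rw [← hyz h (Finset.mem_biUnion.mpr ⟨x₀, hx₀t, hh⟩)]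
    exact hy₀ h hh
  have h1 : f y ∈ Metric.ball (f x₀) (ε/2) := hI x₀ hy₀
  have h2 : f z ∈ Metric.ball (f x₀) (ε/2) := hI x₀ hz₀
  rw [Metric.mem_ball, Real.dist_eq] at h1 h2
  calc |f y - f z| ≤ |f y - f x₀| + |f x₀ - f z| := abs_sub_le _ _ _
    _ ≤ ε/2 + ε/2 := add_le_add h1.le (by rw [abs_sub_comm]; exact h2.le)
    _ = ε := by ring


noncomputable def extb {G : Type*} (K : Finset G) (b : {h // h ∈ K} → Bool) : G → Bool :=
  fun g => if hg : g ∈ K then b ⟨g, hg⟩ else false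


lemma measurable_cyl (K : Finset G) (B : G → Bool) :
    MeasurableSet {x : G → Bool | ∀ h ∈ K, x h = B h} := by
  have : {x : G → Bool | ∀ h ∈ K, x h = B h}
      = ⋂ h ∈ (K : Set G), (fun x : G → Bool => x h) ⁻¹' {B h} := by
    ext x; simp [Set.mem_iInter]
  rw [this]
  exact MeasurableSet.biInter K.countable_toSet fun h _ =>
    (measurable_pi_apply h) (measurableSet_singleton _)


end Aux

set_option maxHeartbeats 1000000 in
/-- If `G` is a countably infinite cancellative semigroup and `(F n)` is a Følner
sequence with `∑ α^{|F n|} < ∞` for all `α ∈ (0,1)`, then for `λ`-almost every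
`x ∈ {0,1}^G` (where `λ = μ` is the Bernoulli `(1/2,1/2)`-product measure,
characterized by its values on cylinder sets) and every continuous
`f : {0,1}^G → ℝ`, the averages `(1/|F n|) ∑_{g ∈ F n} f (σ_g x)` converge to
`∫ f dλ`, where `σ_g x = (h ↦ x (h * g))`. -/
theorem ae_ergodic_averages_tendsto_integral
    {G : Type*} [Semigroup G] [IsCancelMul G] [Countable G] [Infinite G]
    (F : ℕ → Finset G) (hF : IsFolner F)
    (hsum : ∀ α : ℝ, α ∈ Set.Ioo (0 : ℝ) 1 → Summable fun n => α ^ (F n).card)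
    (μ : Measure (G → Bool))
    (hμ : ∀ (K : Finset G) (B : G → Bool),
      μ {x | ∀ h ∈ K, x h = B h} = (2 : ENNReal)⁻¹ ^ K.card) :
    ∀ᵐ x ∂μ, ∀ f : (G → Bool) → ℝ, Continuous f →
      Tendsto (fun n => (∑ g ∈ F n, f (fun h => x (h * g))) / (F n).card)
        atTop (nhds (∫ y, f y ∂μ)) := by
  haveI : IsProbabilityMeasure μ := prob_of_cyl hμ
  have hgood : ∀ᵐ x ∂μ, ∀ pr : (Σ K : Finset G, ({h // h ∈ K} → Bool)),
      Tendsto (fun n => ((Ncnt pr.1 (extb pr.1 pr.2) (F n) x : ℝ)) / (F n).card)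
        atTop (𝓝 ((2:ℝ)⁻¹ ^ pr.1.card)) := by
    rw [MeasureTheory.ae_all_iff]
    intro pr
    exact ae_cylinder_tendsto hμ F hF.1 hsum pr.1 (extb pr.1 pr.2)
  filter_upwards [hgood] with x hx
  have hx' : ∀ (K : Finset G) (B : G → Bool),
      Tendsto (fun n => ((Ncnt K B (F n) x : ℝ)) / (F n).card)
        atTop (𝓝 ((2:ℝ)⁻¹ ^ K.card)) := by
    intro K B
    have h := hx ⟨K, fun h => B h.1⟩
    have heq : (fun n => ((Ncnt K (extb K (fun h => B h.1)) (F n) x : ℝ)) / (F n).card)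
        = fun n => ((Ncnt K B (F n) x : ℝ)) / (F n).card := by
      funext n
      congr 2
      unfold Ncnt
      congr 1
      apply Finset.filter_congr
      intro g _
      refine forall₂_congr ?_
      intro h hh
      rw [extb, dif_pos hh]
    rw [← heq]
    exact h
  intro f hf
  rw [Metric.tendsto_atTop]
  intro r hr
  have hr4 : (0:ℝ) < r/4 := by positivity
  obtain ⟨K, hK⟩ := unif_approx hf hr4
  set fc : ({h // h ∈ K} → Bool) → ℝ := fun b => f (extb K b) with hfc
  set qK : ℝ := (2:ℝ)⁻¹ ^ K.card with hqK
  set L : ℝ := ∑ b : ({h // h ∈ K} → Bool), fc b * qK with hL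
  have hextb_agree : ∀ y : G → Bool, ∀ h ∈ K, y h = extb K (fun h => y h.1) h := by
    intro y h hh
    rw [extb, dif_pos hh]
  have hdecomp : ∀ y : G → Bool,
      f (extb K (fun h => y h.1)) = ∑ b : ({h // h ∈ K} → Bool), fc b *
        (if (∀ h ∈ K, y h = extb K b h) then (1:ℝ) else 0) := by
    intro y
    rw [Finset.sum_eq_single (fun h : {h // h ∈ K} => y h.1)]
    · rw [if_pos (hextb_agree y), mul_one]
    · intro b _ hbne
      rw [if_neg, mul_zero]
      intro hcon
      apply hbne
      funext h
      have h2 := hcon h.1 h.2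
      rw [extb, dif_pos h.2] at h2
      simpa using h2.symm
    · intro hne
      exact absurd (Finset.mem_univ _) hne
  have hKapprox : ∀ y : G → Bool, |f y - f (extb K (fun h => y h.1))| ≤ r/4 := by
    intro y
    exact hK y _ (hextb_agree y)
  have hCn : ∀ n, (∑ g ∈ F n, f (extb K (fun h => x (h.1 * g)))) / (F n).card
      = ∑ b : ({h // h ∈ K} → Bool),
          fc b * ((Ncnt K (extb K b) (F n) x : ℝ) / (F n).card) := by
    intro n
    have h1 : ∀ g, f (extb K (fun h => x (h.1 * g)))
        = ∑ b : ({h // h ∈ K} → Bool), fc b *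
            (if (∀ h ∈ K, x (h * g) = extb K b h) then (1:ℝ) else 0) := by
      intro g
      exact hdecomp (fun h => x (h * g))
    rw [Finset.sum_congr rfl (fun g _ => h1 g), Finset.sum_comm]
    rw [Finset.sum_div]
    apply Finset.sum_congr rfl
    intro b _
    rw [← Finset.mul_sum, Finset.sum_boole, mul_div_assoc]
    rfl
  have hCtend : Tendsto (fun n => ∑ b : ({h // h ∈ K} → Bool),
      fc b * ((Ncnt K (extb K b) (F n) x : ℝ) / (F n).card)) atTop (𝓝 L) := by
    rw [hL]
    apply tendsto_finset_sum
    intro b _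
    exact (hx' K (extb K b)).const_mul (fc b)
  have hfKcont : Continuous (fun y : G → Bool => f (extb K (fun h => y h.1))) := by
    apply hf.comp
    apply continuous_pi
    intro g
    by_cases hg : g ∈ K
    · have h3 : (fun y : G → Bool => extb K (fun h => y h.1) g) = fun y => y g := by
        funext y; rw [extb, dif_pos hg]
      rw [h3]; exact continuous_apply g
    · have h3 : (fun y : G → Bool => extb K (fun h => y h.1) g) = fun _ => false := by
        funext y; rw [extb, dif_neg hg]
      rw [h3]; exact continuous_const
  have hfint : Integrable f μ :=
    hf.integrable_of_hasCompactSupport (HasCompactSupport.of_compactSpace f)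
  have hfKint : Integrable (fun y : G → Bool => f (extb K (fun h => y h.1))) μ :=
    hfKcont.integrable_of_hasCompactSupport (HasCompactSupport.of_compactSpace _)
  have hintfK : ∫ y, f (extb K (fun h => y h.1)) ∂μ = L := by
    have h1 : (fun y : G → Bool => f (extb K (fun h => y h.1)))
        = fun y => ∑ b : ({h // h ∈ K} → Bool), fc b *
            Set.indicator {z : G → Bool | ∀ h ∈ K, z h = extb K b h}
              (fun _ => (1:ℝ)) y := by
      funext y
      rw [hdecomp y]
      apply Finset.sum_congr rfl
      intro b _
      congr 1
      by_cases hy : (∀ h ∈ K, y h = extb K b h)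
      · rw [if_pos hy, Set.indicator_of_mem (by exact hy)]
      · rw [if_neg hy, Set.indicator_of_notMem (by exact hy)]
    rw [h1, integral_finset_sum]
    · apply Finset.sum_congr rfl
      intro b _
      rw [integral_const_mul, integral_indicator_const (1:ℝ) (measurable_cyl K (extb K b)),
        measureReal_def, hμ K (extb K b)]
      have h4 : (((2:ENNReal)⁻¹ ^ K.card).toReal) = qK := by
        rw [ENNReal.toReal_pow, hqK]
        norm_num
      rw [smul_eq_mul, h4, mul_one]
    · intro b _
      exact (((integrable_const (1:ℝ)).indicator (measurable_cyl K (extb K b))).const_mul _)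
  have hint_diff : |∫ y, f y ∂μ - L| ≤ r/4 := by
    rw [← hintfK, ← integral_sub hfint hfKint]
    calc |∫ y, (f y - f (extb K (fun h => y h.1))) ∂μ|
        ≤ ∫ y, |f y - f (extb K (fun h => y h.1))| ∂μ := by
          simpa [Real.norm_eq_abs] using norm_integral_le_integral_norm (μ := μ)
            (f := fun y => f y - f (extb K (fun h => y h.1)))
      _ ≤ ∫ _, (r/4) ∂μ := by
          apply integral_mono (hfint.sub hfKint).abs (integrable_const _)
          intro y
          exact hKapprox y
      _ = r/4 := by simp
  obtain ⟨N₀, hN₀⟩ := (Metric.tendsto_atTop).mp hCtend (r/4) hr4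
  refine ⟨N₀, fun n hn => ?_⟩
  have hMpos : (0:ℝ) < (F n).card := by
    exact_mod_cast Finset.card_pos.mpr (hF.1 n)
  have havg : |(∑ g ∈ F n, f (fun h => x (h * g))) / (F n).card
      - (∑ g ∈ F n, f (extb K (fun h => x (h.1 * g)))) / (F n).card| ≤ r/4 := by
    rw [div_sub_div_same, ← Finset.sum_sub_distrib, abs_div, abs_of_pos hMpos,
      div_le_iff₀ hMpos]
    calc |∑ g ∈ F n, (f (fun h => x (h * g)) - f (extb K (fun h => x (h.1 * g))))|
        ≤ ∑ g ∈ F n, |f (fun h => x (h * g)) - f (extb K (fun h => x (h.1 * g)))| :=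
          Finset.abs_sum_le_sum_abs _ _
      _ ≤ ∑ _g ∈ F n, (r/4) := by
          apply Finset.sum_le_sum
          intro g _
          exact hKapprox (fun h => x (h * g))
      _ = (F n).card * (r/4) := by rw [Finset.sum_const, nsmul_eq_mul]
      _ = r/4 * (F n).card := by ring
  have hcd := hN₀ n hn
  rw [Real.dist_eq, ← hCn n] at hcd
  rw [Real.dist_eq]
  have htri1 := abs_sub_le ((∑ g ∈ F n, f (fun h => x (h * g))) / (F n).card)
    ((∑ g ∈ F n, f (extb K (fun h => x (h.1 * g)))) / (F n).card) L
  have htri2 := abs_sub_le ((∑ g ∈ F n, f (fun h => x (h * g))) / (F n).card)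
    L (∫ y, f y ∂μ)
  have hflip : |L - ∫ y, f y ∂μ| = |∫ y, f y ∂μ - L| := abs_sub_comm _ _
  linarith
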